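/- arXiv:1701.02552 — 4 statements merged into one kernel-verified Lean document; each statement's English description precedes it below -/
import Mathlib

section
/- For all indices i, j ∈ {1,…,N} and all vectors z, z' ∈ ℂ^N, the sets Λ_z^i and Λ_{z'}^j have nonempty intersection if and only if i = j and z ∼ z' (in which case Λ_z^i = Λ_{z'}^j). -/
open MeasureTheory
open scoped Classical

namespace SPI

/-! ## Ontology -/

/-- Ontic states: particle position `q`, field amplitudes `u`, field strengths `τ`. -/
abbrev Lam (N : ℕ) := Fin N × (Fin N → ℂ) × (Fin N → ℝ)

/-- The constraint region of `Λ`: `|u j| ≤ 1` and `τ j ∈ [0,1]`. -/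
def onticSet (N : ℕ) : Set (Lam N) :=
  {l | (∀ j, ‖l.2.1 j‖ ≤ 1) ∧ ∀ j, l.2.2 j ∈ Set.Icc (0 : ℝ) 1}

/-- Highest field strength `τ_max`. -/
noncomputable def tmax {N : ℕ} (τ : Fin N → ℝ) : ℝ := ⨆ j, τ j

/-- `Δ_τ u` : the amplitude vector with only maximal-strength entries retained. -/
noncomputable def deltaVec {N : ℕ} (τ : Fin N → ℝ) (u : Fin N → ℂ) : Fin N → ℂ :=
  fun j => if τ j = tmax τ then u j else 0

/-- Proportionality `z ∼ z'` of complex vectors (a nonzero multiple). -/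
def Propto {N : ℕ} (v w : Fin N → ℂ) : Prop := ∃ α : ℂ, α ≠ 0 ∧ v = α • w

/-- The subset `Λ_z^i` of the ontic state space. -/
def lamSet {N : ℕ} (z : Fin N → ℂ) (i : Fin N) : Set (Lam N) :=
  {l | l.1 = i ∧ l.2.2 i = tmax l.2.2 ∧ 0 < tmax l.2.2 ∧ Propto (deltaVec l.2.2 l.2.1) z}

/-- Membership in the auxiliary class `[z]_i`: a (Borel) probability measure giving
full measure to `Λ_z^i`. -/
def memClassI {N : ℕ} (z : Fin N → ℂ) (i : Fin N) (μ : Measure (Lam N)) : Prop :=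
  IsProbabilityMeasure μ ∧ μ (lamSet z i) = 1

/-- Membership in the class `[z]` (for a unit vector `z`): mixtures `∑ |z i|² • pᵢ`
with `pᵢ ∈ [z]_i` (terms with `z i = 0` omitted). -/
def memClass {N : ℕ} (z : Fin N → ℂ) (μ : Measure (Lam N)) : Prop :=
  ∃ f : Fin N → Measure (Lam N),
    (∀ i, z i ≠ 0 → memClassI z i (f i)) ∧
    μ = ∑ i, ENNReal.ofReal (‖z i‖ ^ 2) • f i

/-- The `j`-th standard basis vector of `ℂ^N`. -/
def eVec {N : ℕ} (j : Fin N) : Fin N → ℂ := fun m => if m = j then 1 else 0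

/-! ## Parallel gate configurations -/

/-- A parallel gate configuration: a partition of the paths `{1,…,N}` into free paths `Fr`,
detector paths `De`, phase-shifter paths `Sh` (phases `ω`), and a collection `Bs` of pairwise
disjoint pairs (beam splitters with constants `R`, `T`, `R + T = 1`). -/
structure Config (N : ℕ) where
  Fr : Finset (Fin N)
  De : Finset (Fin N)
  Sh : Finset (Fin N)
  ω : Fin N → ℝ
  Bs : Finset (Fin N × Fin N)
  R : Fin N × Fin N → ℝ
  T : Fin N × Fin N → ℝ
  hR : ∀ p ∈ Bs, 0 ≤ R p
  hT : ∀ p ∈ Bs, 0 ≤ T p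
  hRT : ∀ p ∈ Bs, R p + T p = 1
  hst : ∀ p ∈ Bs, p.1 ≠ p.2
  hBB : ∀ p ∈ Bs, ∀ q ∈ Bs, p ≠ q → p.1 ≠ q.1 ∧ p.1 ≠ q.2 ∧ p.2 ≠ q.1 ∧ p.2 ≠ q.2
  hFD : Disjoint Fr De
  hFS : Disjoint Fr Sh
  hDS : Disjoint De Sh
  hBdisj : ∀ p ∈ Bs, p.1 ∉ Fr ∧ p.2 ∉ Fr ∧ p.1 ∉ De ∧ p.2 ∉ De ∧ p.1 ∉ Sh ∧ p.2 ∉ Sh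
  hcover : ∀ m : Fin N, m ∈ Fr ∨ m ∈ De ∨ m ∈ Sh ∨ ∃ p ∈ Bs, m = p.1 ∨ m = p.2

/-- Path `m` enters some beam splitter of the configuration. -/
def inB {N : ℕ} (c : Config N) (m : Fin N) : Prop := ∃ p ∈ c.Bs, m = p.1 ∨ m = p.2

/-- The new field strengths `τ'` produced by the parallel gates. -/
noncomputable def newTau {N : ℕ} (c : Config N) (q : Fin N) (τ : Fin N → ℝ) : Fin N → ℝ :=
  fun m =>
    if m ∈ c.De then (if q = m then 1 else 0)
    else if hm : inB c m then max (τ hm.choose.1) (τ hm.choose.2) / 2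
    else τ m / 2

/-- The new field amplitudes `u'` produced by the parallel gates. -/
noncomputable def newAmp {N : ℕ} (c : Config N) (q : Fin N) (u : Fin N → ℂ) (τ : Fin N → ℝ) :
    Fin N → ℂ :=
  fun m =>
    if m ∈ c.De then (if q = m then 1 else u m)
    else if m ∈ c.Sh then Complex.exp (Complex.I * (c.ω m : ℂ)) * u m
    else if hm : inB c m then
      (let p := hm.choose
       let ts := max (τ p.1) (τ p.2)
       let us : ℂ := if τ p.1 = ts then u p.1 else 0
       let ut : ℂ := if τ p.2 = ts then u p.2 else 0
       if m = p.1 then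
         Complex.I * (Real.sqrt (c.R p) : ℂ) * us + (Real.sqrt (c.T p) : ℂ) * ut
       else
         (Real.sqrt (c.T p) : ℂ) * us + Complex.I * (Real.sqrt (c.R p) : ℂ) * ut)
    else u m

/-- One step of the dynamics: the Markov kernel `K` of the parallel gate configuration,
as a measure-valued map on ontic states. -/
noncomputable def step {N : ℕ} (c : Config N) (l : Lam N) : Measure (Lam N) :=
  let q := l.1
  let u' := newAmp c q l.2.1 l.2.2
  let τ' := newTau c q l.2.2
  if hq : inB c q then
    (let p := hq.choose
     let a := ‖u' p.1‖ ^ 2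
     let b := ‖u' p.2‖ ^ 2
     if a + b = 0 then Measure.dirac (q, u', τ')
     else ENNReal.ofReal (a / (a + b)) • Measure.dirac (p.1, u', τ')
        + ENNReal.ofReal (b / (a + b)) • Measure.dirac (p.2, u', τ'))
  else Measure.dirac (q, u', τ')

/-- The output measure `pK` of the kernel applied to an input measure `p`. -/
noncomputable def out {N : ℕ} (c : Config N) (μ : Measure (Lam N)) : Measure (Lam N) :=
  μ.bind (step c)

/-! ## Interferometric matrices -/

/-- The projector `P_j` onto component `j`. -/
def Pmat {N : ℕ} (j : Fin N) : Matrix (Fin N) (Fin N) ℂ :=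
  Matrix.diagonal (fun a => if a = j then 1 else 0)

/-- The phase-shifter matrix `S_k(ω)`. -/
noncomputable def Smat {N : ℕ} (k : Fin N) (ω : ℝ) : Matrix (Fin N) (Fin N) ℂ :=
  Matrix.diagonal (fun a => if a = k then Complex.exp (Complex.I * (ω : ℂ)) else 1)

/-- The beam-splitter matrix `B_st(R,T)`: identity outside `{s,t}` and
`[[i√R, √T],[√T, i√R]]` on components `{s,t}`. -/
noncomputable def Bmat {N : ℕ} (s t : Fin N) (R T : ℝ) : Matrix (Fin N) (Fin N) ℂ :=
  Matrix.of fun a b =>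
    if a = s then
      (if b = s then Complex.I * (Real.sqrt R : ℂ) else if b = t then (Real.sqrt T : ℂ) else 0)
    else if a = t then
      (if b = s then (Real.sqrt T : ℂ) else if b = t then Complex.I * (Real.sqrt R : ℂ) else 0)
    else if a = b then 1 else 0

/-- The matrix `Δ_τ` selecting the components of maximal strength. -/
noncomputable def Dmat {N : ℕ} (τ : Fin N → ℝ) : Matrix (Fin N) (Fin N) ℂ :=
  Matrix.diagonal (fun j => if τ j = tmax τ then 1 else 0)

/-- The matrix `Δ^(st)_τ` with `δ_{τ_s,max(τ_s,τ_t)}`, `δ_{τ_t,max(τ_s,τ_t)}` at `s`, `t`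
and `1` elsewhere on the diagonal. -/
noncomputable def DmatST {N : ℕ} (τ : Fin N → ℝ) (s t : Fin N) : Matrix (Fin N) (Fin N) ℂ :=
  Matrix.diagonal (fun m =>
    if m = s then (if τ s = max (τ s) (τ t) then 1 else 0)
    else if m = t then (if τ t = max (τ s) (τ t) then 1 else 0)
    else 1)

/-! ## Commutation lemmas -/

lemma commute_diagonal {N : ℕ} (d e : Fin N → ℂ) :
    Commute (Matrix.diagonal d) (Matrix.diagonal e) := by
  have h : (fun i => d i * e i) = fun i => e i * d i := funext fun i => mul_comm _ _
  show Matrix.diagonal d * Matrix.diagonal e = Matrix.diagonal e * Matrix.diagonal d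
  rw [Matrix.diagonal_mul_diagonal, Matrix.diagonal_mul_diagonal, h]

lemma oneSubP_diagonal {N : ℕ} (j : Fin N) :
    (1 : Matrix (Fin N) (Fin N) ℂ) - Pmat j
      = Matrix.diagonal (fun a => 1 - if a = j then 1 else 0) := by
  rw [Pmat, ← Matrix.diagonal_one, Matrix.diagonal_sub]

lemma commute_oneSubP {N : ℕ} (j j' : Fin N) :
    Commute ((1 : Matrix (Fin N) (Fin N) ℂ) - Pmat j) (1 - Pmat j') := by
  rw [oneSubP_diagonal, oneSubP_diagonal]; exact commute_diagonal _ _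

/-- A matrix which differs from the identity only inside the block `{s,t} × {s,t}`. -/
def IsBlock {N : ℕ} (s t : Fin N) (M : Matrix (Fin N) (Fin N) ℂ) : Prop :=
  ∀ a b, ¬((a = s ∨ a = t) ∧ (b = s ∨ b = t)) →
    M a b = (1 : Matrix (Fin N) (Fin N) ℂ) a b

lemma commute_of_isBlock {N : ℕ} {s t s' t' : Fin N} {M M' : Matrix (Fin N) (Fin N) ℂ}
    (hM : IsBlock s t M) (hM' : IsBlock s' t' M')
    (h1 : s ≠ s') (h2 : s ≠ t') (h3 : t ≠ s') (h4 : t ≠ t') : Commute M M' := by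
  have hrow : ∀ a b : Fin N, a ≠ s → a ≠ t → (M - 1) a b = 0 := by
    intro a b ha hb
    have h := hM a b (by tauto)
    simp [Matrix.sub_apply, h]
  have hcol : ∀ a b : Fin N, b ≠ s → b ≠ t → (M - 1) a b = 0 := by
    intro a b hb1 hb2
    have h := hM a b (by tauto)
    simp [Matrix.sub_apply, h]
  have hrow' : ∀ a b : Fin N, a ≠ s' → a ≠ t' → (M' - 1) a b = 0 := by
    intro a b ha hb
    have h := hM' a b (by tauto)
    simp [Matrix.sub_apply, h]
  have hcol' : ∀ a b : Fin N, b ≠ s' → b ≠ t' → (M' - 1) a b = 0 := by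
    intro a b hb1 hb2
    have h := hM' a b (by tauto)
    simp [Matrix.sub_apply, h]
  have hEE' : (M - 1) * (M' - 1) = 0 := by
    ext a b
    rw [Matrix.mul_apply, Matrix.zero_apply]
    apply Finset.sum_eq_zero
    intro k _
    by_cases hk : k = s ∨ k = t
    · have : (M' - 1) k b = 0 := by
        rcases hk with h | h
        · subst h; exact hrow' _ _ h1 h2
        · subst h; exact hrow' _ _ h3 h4
      rw [this, mul_zero]
    · push_neg at hk
      rw [hcol a k hk.1 hk.2, zero_mul]
  have hE'E : (M' - 1) * (M - 1) = 0 := by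
    ext a b
    rw [Matrix.mul_apply, Matrix.zero_apply]
    apply Finset.sum_eq_zero
    intro k _
    by_cases hk : k = s' ∨ k = t'
    · have : (M - 1) k b = 0 := by
        rcases hk with h | h
        · subst h; exact hrow _ _ (Ne.symm h1) (Ne.symm h3)
        · subst h; exact hrow _ _ (Ne.symm h2) (Ne.symm h4)
      rw [this, mul_zero]
    · push_neg at hk
      rw [hcol' a k hk.1 hk.2, zero_mul]
  have expand : ∀ A B : Matrix (Fin N) (Fin N) ℂ,
      A * B = (A - 1) * (B - 1) + A + B - 1 := by
    intro A B; noncomm_ring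
  unfold Commute SemiconjBy
  rw [expand M M', expand M' M, hEE', hE'E]
  abel

lemma isBlock_Bmat {N : ℕ} (s t : Fin N) (R T : ℝ) : IsBlock s t (Bmat s t R T) := by
  intro a b hab
  by_cases has : a = s ∨ a = t
  · have hbs : ¬(b = s ∨ b = t) := fun h => hab ⟨has, h⟩
    push_neg at hbs
    have hb : a ≠ b := by
      rcases has with h | h <;> subst h
      · exact fun hc => hbs.1 hc.symm
      · exact fun hc => hbs.2 hc.symm
    rw [Matrix.one_apply_ne hb]
    rcases has with h | h <;> subst h <;> simp [Bmat, hbs.1, hbs.2]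
  · push_neg at has
    simp [Bmat, Matrix.one_apply, has.1, has.2]

lemma isBlock_one_sub_Pmat {N : ℕ} (j : Fin N) :
    IsBlock j j ((1 : Matrix (Fin N) (Fin N) ℂ) - Pmat j) := by
  intro a b hab
  have haj : a ≠ j ∨ b ≠ j := by tauto
  rw [oneSubP_diagonal]
  by_cases h : a = b
  · subst h
    have haj' : a ≠ j := by tauto
    simp [Matrix.diagonal_apply_eq, Matrix.one_apply_eq, haj']
  · simp [Matrix.diagonal_apply_ne _ h, Matrix.one_apply_ne h]

lemma isBlock_Smat {N : ℕ} (k : Fin N) (ω : ℝ) : IsBlock k k (Smat k ω) := by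
  intro a b hab
  have haj : a ≠ k ∨ b ≠ k := by tauto
  by_cases h : a = b
  · subst h
    have haj' : a ≠ k := by tauto
    simp [Smat, Matrix.diagonal_apply_eq, Matrix.one_apply_eq, haj']
  · simp [Smat, Matrix.diagonal_apply_ne _ h, Matrix.one_apply_ne h]

lemma isBlock_mul_diag {N : ℕ} (s t : Fin N) (M : Matrix (Fin N) (Fin N) ℂ)
    (hM : IsBlock s t M) (d : Fin N → ℂ) (hd : ∀ m, m ≠ s → m ≠ t → d m = 1) :
    IsBlock s t (M * Matrix.diagonal d) := by
  intro a b hab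
  rw [Matrix.mul_diagonal, hM a b hab]
  by_cases h : a = b
  · subst h
    have h1 : a ≠ s := fun hc => hab ⟨Or.inl hc, Or.inl hc⟩
    have h2 : a ≠ t := fun hc => hab ⟨Or.inr hc, Or.inr hc⟩
    rw [Matrix.one_apply_eq, hd a h1 h2, mul_one]
  · rw [Matrix.one_apply_ne h, zero_mul]

lemma isBlock_BmatD {N : ℕ} (s t : Fin N) (R T : ℝ) (τ : Fin N → ℝ) :
    IsBlock s t (Bmat s t R T * DmatST τ s t) := by
  unfold DmatST
  refine isBlock_mul_diag s t _ (isBlock_Bmat s t R T) _ ?_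
  intro m h1 h2
  simp [h1, h2]

/-! ## The matrix `W` of the configuration -/

noncomputable def Dprod {N : ℕ} (c : Config N) : Matrix (Fin N) (Fin N) ℂ :=
  c.De.noncommProd (fun j => 1 - Pmat j) (fun _ _ _ _ _ => commute_oneSubP _ _)

noncomputable def Sprod {N : ℕ} (c : Config N) : Matrix (Fin N) (Fin N) ℂ :=
  c.Sh.noncommProd (fun k => Smat k (c.ω k)) (fun _ _ _ _ _ => commute_diagonal _ _)

noncomputable def Bprod {N : ℕ} (c : Config N) : Matrix (Fin N) (Fin N) ℂ :=
  c.Bs.noncommProd (fun p => Bmat p.1 p.2 (c.R p) (c.T p))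
    (fun p hp q hq hpq => by
      obtain ⟨h1, h2, h3, h4⟩ := c.hBB p hp q hq hpq
      exact commute_of_isBlock (isBlock_Bmat _ _ _ _) (isBlock_Bmat _ _ _ _) h1 h2 h3 h4)

/-- The matrix `W = ∏_{j∈D}(1−P_j) ∏_{k∈S} S_k(ω_k) ∏_{{s,t}∈B} B_st(R_st,T_st)`. -/
noncomputable def Wmat {N : ℕ} (c : Config N) : Matrix (Fin N) (Fin N) ℂ :=
  Dprod c * Sprod c * Bprod c

/-- The vector `W z`. -/
noncomputable def Wvec {N : ℕ} (c : Config N) (z : Fin N → ℂ) : Fin N → ℂ :=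
  (Wmat c).mulVec z

/-- The product `∏_{{s,t}∈B} (B_st(R_st,T_st) Δ^(st)_τ)`. -/
noncomputable def BDprod {N : ℕ} (c : Config N) (τ : Fin N → ℝ) : Matrix (Fin N) (Fin N) ℂ :=
  c.Bs.noncommProd (fun p => Bmat p.1 p.2 (c.R p) (c.T p) * DmatST τ p.1 p.2)
    (fun p hp q hq hpq => by
      obtain ⟨h1, h2, h3, h4⟩ := c.hBB p hp q hq hpq
      exact commute_of_isBlock (isBlock_BmatD _ _ _ _ _) (isBlock_BmatD _ _ _ _ _) h1 h2 h3 h4)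

lemma propto_refl {N : ℕ} (v : Fin N → ℂ) : Propto v v :=
  ⟨1, one_ne_zero, (one_smul _ _).symm⟩

lemma propto_symm {N : ℕ} {v w : Fin N → ℂ} (h : Propto v w) : Propto w v := by
  obtain ⟨α, hα, hv⟩ := h
  exact ⟨α⁻¹, inv_ne_zero hα, by rw [hv, smul_smul, inv_mul_cancel₀ hα, one_smul]⟩

lemma propto_trans {N : ℕ} {u v w : Fin N → ℂ} (h1 : Propto u v) (h2 : Propto v w) :
    Propto u w := by
  obtain ⟨α, hα, hu⟩ := h1
  obtain ⟨β, hβ, hv⟩ := h2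
  exact ⟨α * β, mul_ne_zero hα hβ, by rw [hu, hv, smul_smul]⟩

lemma tmax_const_one {N : ℕ} [Nonempty (Fin N)] : tmax (fun _ : Fin N => (1 : ℝ)) = 1 := by
  simp [tmax]

/-- `Λ_z^i ∩ Λ_{z'}^j ≠ ∅ ↔ i = j ∧ z ∼ z'` (in which case the two
sets coincide). -/
theorem lamSet_inter_nonempty_iff {N : ℕ} (i j : Fin N) (z z' : Fin N → ℂ) :
    ((lamSet z i ∩ lamSet z' j).Nonempty ↔ i = j ∧ Propto z z') ∧
    (i = j ∧ Propto z z' → lamSet z i = lamSet z' j) := by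
  have key : ∀ h : i = j ∧ Propto z z', lamSet z i = lamSet z' j := by
    rintro ⟨rfl, hzz⟩
    ext l
    simp only [lamSet, Set.mem_setOf_eq]
    exact and_congr_right fun _ => and_congr_right fun _ => and_congr_right fun _ =>
      ⟨fun h => propto_trans h hzz, fun h => propto_trans h (propto_symm hzz)⟩
  refine ⟨⟨?_, ?_⟩, key⟩
  · rintro ⟨l, ⟨hq1, _, _, hp1⟩, ⟨hq2, _, _, hp2⟩⟩
    exact ⟨hq1 ▸ hq2, propto_trans (propto_symm hp1) hp2⟩
  · rintro ⟨rfl, hzz⟩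
    have : Nonempty (Fin N) := ⟨i⟩
    refine ⟨(i, z, fun _ => 1), ?_, ?_⟩ <;>
      refine ⟨rfl, tmax_const_one.symm, by rw [tmax_const_one]; norm_num, ?_⟩
    · have : deltaVec (fun _ : Fin N => (1 : ℝ)) z = z := by
        funext m; simp [deltaVec, tmax_const_one]
      rw [this]; exact propto_refl z
    · have : deltaVec (fun _ : Fin N => (1 : ℝ)) z = z := by
        funext m; simp [deltaVec, tmax_const_one]
      rw [this]; exact hzz

end SPI
end

section
/- For all indices i, j ∈ {1,…,N} and all vectors z, z' ∈ ℂ^N, the classes [z]_i and [z']_j of probability measures have nonempty intersection if and only if i = j and z ∼ z'. -/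
open MeasureTheory
open scoped Classical

namespace SPI

lemma measurableSet_propto {N : ℕ} (z : Fin N → ℂ) :
    MeasurableSet {v : Fin N → ℂ | Propto v z} := by
  by_cases hz : z = 0
  · have h : {v : Fin N → ℂ | Propto v z} = {0} := by
      subst hz
      ext v
      constructor
      · rintro ⟨α, hα, rfl⟩; simp
      · rintro rfl; exact ⟨1, one_ne_zero, by simp⟩
    rw [h]
    exact measurableSet_singleton 0
  · have h : {v : Fin N → ℂ | Propto v z}
        = {(0 : Fin N → ℂ)}ᶜ ∩ ⋂ a, ⋂ b, {v : Fin N → ℂ | v a * z b = v b * z a} := by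
      ext v
      simp only [Set.mem_setOf_eq, Set.mem_inter_iff, Set.mem_compl_iff,
        Set.mem_singleton_iff, Set.mem_iInter]
      constructor
      · rintro ⟨α, hα, rfl⟩
        refine ⟨fun hv => hz ?_, fun a b => ?_⟩
        · funext k
          have := congrFun hv k
          simp only [Pi.smul_apply, smul_eq_mul, Pi.zero_apply] at this
          rcases mul_eq_zero.mp this with h' | h'
          · exact absurd h' hα
          · exact h'
        · simp only [Pi.smul_apply, smul_eq_mul]; ring
      · rintro ⟨hv, hrel⟩
        obtain ⟨b, hb⟩ : ∃ b, z b ≠ 0 := by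
          by_contra hh
          push_neg at hh
          exact hz (funext hh)
        have hvb : v b ≠ 0 := by
          intro hvb
          apply hv
          funext a
          have := hrel a b
          rw [hvb, zero_mul] at this
          exact (mul_eq_zero.mp this).resolve_right hb
        refine ⟨v b / z b, div_ne_zero hvb hb, ?_⟩
        funext a
        have := hrel a b
        rw [Pi.smul_apply, smul_eq_mul, div_mul_eq_mul_div, eq_div_iff hb]
        linear_combination this
    rw [h]
    refine ((measurableSet_singleton 0).compl).inter ?_
    refine MeasurableSet.iInter fun a => MeasurableSet.iInter fun b => ?_
    exact measurableSet_eq_fun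
      (by fun_prop) (by fun_prop)

lemma eq_tmax_iff {N : ℕ} (τ : Fin N → ℝ) (j : Fin N) :
    τ j = tmax τ ↔ ∀ k, τ k ≤ τ j := by
  haveI : Nonempty (Fin N) := ⟨j⟩
  have bdd : BddAbove (Set.range τ) := (Set.finite_range τ).bddAbove
  constructor
  · intro h k
    exact (le_ciSup bdd k).trans_eq h.symm
  · intro h
    exact le_antisymm (le_ciSup bdd j) (ciSup_le h)

lemma measurable_deltaVecFun {N : ℕ} :
    Measurable (fun l : Lam N => deltaVec l.2.2 l.2.1) := by
  rw [measurable_pi_iff]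
  intro j
  have hτ : ∀ k : Fin N, Measurable fun l : Lam N => l.2.2 k := fun k =>
    (measurable_pi_apply k).comp (measurable_snd.comp measurable_snd)
  have hu : Measurable fun l : Lam N => l.2.1 j :=
    (measurable_pi_apply j).comp (measurable_fst.comp measurable_snd)
  have hset : MeasurableSet {l : Lam N | l.2.2 j = tmax l.2.2} := by
    have h : {l : Lam N | l.2.2 j = tmax l.2.2} = ⋂ k, {l : Lam N | l.2.2 k ≤ l.2.2 j} := by
      ext l
      simpa [Set.mem_iInter] using eq_tmax_iff l.2.2 j
    rw [h]
    exact MeasurableSet.iInter fun k => measurableSet_le (hτ k) (hτ j)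
  exact Measurable.ite hset hu measurable_const

/-- Two sets of full measure separated by a measurable set give a contradiction. -/
lemma full_measure_separated {α : Type*} [MeasurableSpace α] {μ : Measure α}
    (hp : IsProbabilityMeasure μ) {A B M : Set α} (hM : MeasurableSet M)
    (hAM : A ⊆ M) (hBM : B ∩ M = ∅) (hA : μ A = 1) (hB : μ B = 1) : False := by
  have hμM : μ M = 1 :=
    le_antisymm prob_le_one (hA ▸ measure_mono hAM)
  have hMc : μ Mᶜ = 0 := by
    rw [measure_compl hM (measure_ne_top μ M), hμM, measure_univ, tsub_self]
  have hBMc : B ⊆ Mᶜ := by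
    intro x hx hxM
    exact Set.eq_empty_iff_forall_notMem.mp hBM x ⟨hx, hxM⟩
  have : μ B = 0 := le_antisymm (hMc ▸ measure_mono hBMc) zero_le
  rw [hB] at this
  exact one_ne_zero this

/-- The classes `[z]_i` and `[z']_j` intersect iff `i = j` and `z ∼ z'`. -/
theorem classI_inter_nonempty_iff {N : ℕ} (i j : Fin N) (z z' : Fin N → ℂ) :
    (∃ μ : Measure (Lam N), memClassI z i μ ∧ memClassI z' j μ) ↔ i = j ∧ Propto z z' := by
  constructor
  · rintro ⟨μ, ⟨hμp, hA⟩, ⟨-, hB⟩⟩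
    have hij : i = j := by
      by_contra hij
      refine full_measure_separated hμp
        (M := Prod.fst ⁻¹' ({i} : Set (Fin N))) ?_ ?_ ?_ hA hB
      · exact measurable_fst (measurableSet_singleton i)
      · intro l hl
        exact hl.1
      · ext l
        simp only [Set.mem_inter_iff, Set.mem_preimage, Set.mem_singleton_iff,
          Set.mem_empty_iff_false, iff_false, not_and]
        intro hl hli
        exact hij (hli.symm.trans hl.1)
    subst hij
    refine ⟨rfl, ?_⟩
    by_contra hzz
    refine full_measure_separated hμp
      (M := (fun l : Lam N => deltaVec l.2.2 l.2.1) ⁻¹' {v | Propto v z}) ?_ ?_ ?_ hA hB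
    · exact measurable_deltaVecFun (measurableSet_propto z)
    · intro l hl
      exact hl.2.2.2
    · ext l
      simp only [Set.mem_inter_iff, Set.mem_preimage, Set.mem_setOf_eq,
        Set.mem_empty_iff_false, iff_false, not_and]
      intro hl hM
      exact hzz (propto_trans (propto_symm hM) hl.2.2.2)
  · rintro ⟨rfl, hzz⟩
    haveI : Nonempty (Fin N) := ⟨i⟩
    have htm : tmax (fun _ : Fin N => (1 : ℝ)) = 1 := ciSup_const
    have hdelta : deltaVec (fun _ : Fin N => (1 : ℝ)) z = z := by
      funext k
      simp [deltaVec, htm]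
    have hpos : 0 < tmax (fun _ : Fin N => (1 : ℝ)) := by rw [htm]; exact one_pos
    have hpr : Propto (deltaVec (fun _ : Fin N => (1 : ℝ)) z) z := by
      rw [hdelta]; exact propto_refl z
    have hpr' : Propto (deltaVec (fun _ : Fin N => (1 : ℝ)) z) z' := by
      rw [hdelta]; exact hzz
    refine ⟨Measure.dirac (i, z, fun _ => (1 : ℝ)), ⟨?_, ?_⟩, ⟨?_, ?_⟩⟩
    · infer_instance
    · exact Measure.dirac_apply_of_mem ⟨rfl, htm.symm, hpos, hpr⟩
    · infer_instance
    · exact Measure.dirac_apply_of_mem ⟨rfl, htm.symm, hpos, hpr'⟩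

end SPI
end

section
/- For all unit vectors z, z' ∈ ℂ^N, the classes [z] and [z'] have nonempty intersection if and only if z ∼ z' (i.e., z and z' differ by an overall phase); consequently the classes [z] for distinct rays are pairwise disjoint subsets of the space of Borel probability measures on Λ. -/
open MeasureTheory
open scoped Classical

namespace SPI

section Aux

variable {N : ℕ}

lemma propto_trans_left {v z z' : Fin N → ℂ} (h1 : Propto v z) (h2 : Propto v z') :
    Propto z z' := by
  obtain ⟨α, hα, hv⟩ := h1
  obtain ⟨β, hβ, hv'⟩ := h2
  refine ⟨α⁻¹ * β, mul_ne_zero (inv_ne_zero hα) hβ, ?_⟩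
  have : α⁻¹ • v = α⁻¹ • (α • z) := by rw [← hv]
  rw [smul_smul, inv_mul_cancel₀ hα, one_smul] at this
  rw [← this, hv', smul_smul]

lemma propto_iff_of_ne {z : Fin N → ℂ} {i : Fin N} (hzi : z i ≠ 0) (v : Fin N → ℂ) :
    Propto v z ↔ v i ≠ 0 ∧ ∀ m, v m = (v i / z i) * z m := by
  constructor
  · rintro ⟨α, hα, rfl⟩
    have hvi : (α • z) i = α * z i := rfl
    refine ⟨by simp [hvi, hα, hzi], fun m => ?_⟩
    have : α * z i / z i = α := by field_simp
    simp only [Pi.smul_apply, smul_eq_mul]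
    rw [this]
  · rintro ⟨h0, h⟩
    refine ⟨v i / z i, div_ne_zero h0 hzi, funext fun m => ?_⟩
    simpa using h m

lemma measurable_tmax [Nonempty (Fin N)] : Measurable (fun τ : Fin N → ℝ => tmax τ) := by
  have h : (fun τ : Fin N → ℝ => tmax τ)
      = Finset.univ.sup' Finset.univ_nonempty (fun j => fun τ : Fin N → ℝ => τ j) := by
    funext τ
    rw [Finset.sup'_apply, tmax, ← Finset.sup'_univ_eq_ciSup]
  rw [h]
  exact Finset.measurable_sup' _ (fun n _ => measurable_pi_apply n)

lemma measurable_lamSet {z : Fin N → ℂ} {i : Fin N} (hzi : z i ≠ 0) :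
    MeasurableSet (lamSet z i) := by
  have hN : Nonempty (Fin N) := ⟨i⟩
  have hτ : Measurable (fun l : Lam N => l.2.2) := measurable_snd.snd
  have hu : Measurable (fun l : Lam N => l.2.1) := measurable_snd.fst
  have hT : Measurable (fun l : Lam N => tmax l.2.2) := measurable_tmax.comp hτ
  have hτj : ∀ j, Measurable (fun l : Lam N => l.2.2 j) :=
    fun j => (measurable_pi_apply j).comp hτ
  have huj : ∀ j, Measurable (fun l : Lam N => l.2.1 j) :=
    fun j => (measurable_pi_apply j).comp hu
  have hD : ∀ j, Measurable (fun l : Lam N => deltaVec l.2.2 l.2.1 j) := by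
    intro j
    have : (fun l : Lam N => deltaVec l.2.2 l.2.1 j)
        = fun l : Lam N => if l.2.2 j = tmax l.2.2 then l.2.1 j else 0 := rfl
    rw [this]
    exact Measurable.ite (measurableSet_eq_fun (hτj j) hT) (huj j) measurable_const
  have hset : lamSet z i
      = ({l : Lam N | l.1 = i}
        ∩ {l : Lam N | l.2.2 i = tmax l.2.2}
        ∩ {l : Lam N | 0 < tmax l.2.2})
        ∩ ({l : Lam N | deltaVec l.2.2 l.2.1 i ≠ 0}
          ∩ ⋂ m, {l : Lam N | deltaVec l.2.2 l.2.1 m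
              = (deltaVec l.2.2 l.2.1 i / z i) * z m}) := by
    ext l
    simp only [lamSet, Set.mem_setOf_eq, Set.mem_inter_iff, Set.mem_iInter]
    rw [propto_iff_of_ne hzi]
    tauto
  rw [hset]
  refine MeasurableSet.inter (MeasurableSet.inter (MeasurableSet.inter ?_ ?_) ?_)
    (MeasurableSet.inter ?_ ?_)
  · exact measurable_fst (MeasurableSet.singleton i)
  · exact measurableSet_eq_fun (hτj i) hT
  · exact measurableSet_lt measurable_const hT
  · exact (measurableSet_eq_fun (hD i) measurable_const).compl
  · exact MeasurableSet.iInter fun m =>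
      measurableSet_eq_fun (hD m) (((hD i).div_const (z i)).mul_const (z m))

end Aux


/-- For unit vectors `z`, `z'`, the classes `[z]` and `[z']` intersect
iff `z ∼ z'`; consequently classes for distinct rays are disjoint. -/
theorem class_inter_nonempty_iff {N : ℕ} (z z' : Fin N → ℂ)
    (hz : ∑ i, ‖z i‖ ^ 2 = 1) (hz' : ∑ i, ‖z' i‖ ^ 2 = 1) :
    ((∃ μ : Measure (Lam N), memClass z μ ∧ memClass z' μ) ↔ Propto z z') ∧
    (¬ Propto z z' →
      {μ : Measure (Lam N) | memClass z μ} ∩ {μ : Measure (Lam N) | memClass z' μ} = ∅) := by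
  have hNne : Nonempty (Fin N) := by
    rcases Nat.eq_zero_or_pos N with h | h
    · subst h; simp at hz
    · exact ⟨⟨0, h⟩⟩
  have happly : ∀ (c : Fin N → ENNReal) (h : Fin N → Measure (Lam N)) (s : Set (Lam N)),
      (∑ j, c j • h j) s = ∑ j, c j * h j s := by
    intro c h s
    rw [Measure.finset_sum_apply]
    simp [Measure.smul_apply, smul_eq_mul]
  have main : (∃ μ : Measure (Lam N), memClass z μ ∧ memClass z' μ) ↔ Propto z z' := by
    constructor
    · rintro ⟨μ, ⟨f, hf, rfl⟩, ⟨g, hg, hgsum⟩⟩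
      obtain ⟨i, hzi⟩ : ∃ i, z i ≠ 0 := by
        by_contra h; push_neg at h
        simp [h] at hz
      set A := lamSet z i with hAdef
      have hA : MeasurableSet A := measurable_lamSet hzi
      have hfi := hf i hzi
      have hlb : ENNReal.ofReal (‖z i‖ ^ 2)
          ≤ ∑ j, ENNReal.ofReal (‖z j‖ ^ 2) * f j A := by
        have h1 : ENNReal.ofReal (‖z i‖ ^ 2) * f i A
            ≤ ∑ j, ENNReal.ofReal (‖z j‖ ^ 2) * f j A :=
          Finset.single_le_sum
            (f := fun j => ENNReal.ofReal (‖z j‖ ^ 2) * f j A)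
            (fun j _ => zero_le) (Finset.mem_univ i)
        rwa [hfi.2, mul_one] at h1
      have hcpos : (0 : ENNReal) < ENNReal.ofReal (‖z i‖ ^ 2) :=
        ENNReal.ofReal_pos.mpr (pow_pos (norm_pos_iff.mpr hzi) 2)
      have hsum_ne : ∑ j, ENNReal.ofReal (‖z' j‖ ^ 2) * g j A ≠ 0 := by
        have heq : ∑ j, ENNReal.ofReal (‖z j‖ ^ 2) * f j A
            = ∑ j, ENNReal.ofReal (‖z' j‖ ^ 2) * g j A := by
          rw [← happly, ← happly, ← hgsum]
        intro h0
        rw [← heq] at h0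
        exact absurd (le_antisymm (h0 ▸ hlb) zero_le) hcpos.ne'
      obtain ⟨j, -, hj⟩ := Finset.exists_ne_zero_of_sum_ne_zero hsum_ne
      have hz'j : z' j ≠ 0 := by
        intro h0; apply hj; simp [h0]
      have hgA : g j A ≠ 0 := by
        intro h0; apply hj; simp [h0]
      have hgj := hg j hz'j
      have hprob : IsProbabilityMeasure (g j) := hgj.1
      have hne : (A ∩ lamSet z' j).Nonempty := by
        by_contra hemp
        rw [Set.not_nonempty_iff_eq_empty, Set.eq_empty_iff_forall_notMem] at hemp
        have hsub : lamSet z' j ⊆ Aᶜ := fun x hx hxA => hemp x ⟨hxA, hx⟩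
        have h1 : (1 : ENNReal) ≤ g j Aᶜ := hgj.2 ▸ measure_mono hsub
        have h1' : g j Aᶜ = 1 := le_antisymm prob_le_one h1
        have h2 : g j A + g j Aᶜ = 1 := by
          rw [measure_add_measure_compl hA]; exact hprob.measure_univ
        rw [h1'] at h2
        apply hgA
        rw [add_comm] at h2
        have h3 : (1 : ENNReal) + g j A = 1 + 0 := by rw [h2, add_zero]
        exact (ENNReal.add_right_inj ENNReal.one_ne_top).mp h3
      obtain ⟨l, hlA, hlB⟩ := hne
      exact propto_trans_left hlA.2.2.2 hlB.2.2.2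
    · rintro ⟨α, hα, hzz⟩
      have h1 : ∀ m, ‖z m‖ = ‖α‖ * ‖z' m‖ := by
        intro m; rw [hzz]; simp
      have h2 : ‖α‖ ^ 2 = 1 := by
        have hs : ∑ m, ‖z m‖ ^ 2
            = ‖α‖ ^ 2 * ∑ m, ‖z' m‖ ^ 2 := by
          rw [Finset.mul_sum]
          exact Finset.sum_congr rfl fun m _ => by rw [h1 m, mul_pow]
        rw [hz, hz', mul_one] at hs
        exact hs.symm
      have h3 : ‖α‖ = 1 := by
        have h4 : (‖α‖ - 1) * (‖α‖ + 1) = 0 := by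
          linear_combination h2
        rcases mul_eq_zero.mp h4 with h5 | h5
        · linarith
        · have := norm_nonneg α; linarith
      have habs : ∀ m, ‖z m‖ = ‖z' m‖ := by
        intro m; rw [h1 m, h3, one_mul]
      set f : Fin N → Measure (Lam N) :=
        fun i => Measure.dirac ((i, z, fun _ => (1 : ℝ)) : Lam N) with hfdef
      have hmem : ∀ (w : Fin N → ℂ), Propto z w →
          ∀ i : Fin N, ((i, z, fun _ => (1 : ℝ)) : Lam N) ∈ lamSet w i := by
        intro w hw i
        have ht : tmax (fun _ : Fin N => (1 : ℝ)) = 1 := ciSup_const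
        refine ⟨rfl, ?_, ?_, ?_⟩
        · simp [ht]
        · rw [ht]; norm_num
        · have hd : deltaVec (fun _ : Fin N => (1 : ℝ)) z = z := by
            funext m; simp [deltaVec, ht]
          show Propto (deltaVec (fun _ : Fin N => (1 : ℝ)) z) w
          rw [hd]; exact hw
      refine ⟨∑ i, ENNReal.ofReal (‖z i‖ ^ 2) • f i, ⟨f, ?_, rfl⟩,
        ⟨f, ?_, ?_⟩⟩
      · intro i _
        exact ⟨by infer_instance,
          Measure.dirac_apply_of_mem (hmem z ⟨1, one_ne_zero, (one_smul ℂ z).symm⟩ i)⟩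
      · intro i _
        exact ⟨by infer_instance, Measure.dirac_apply_of_mem (hmem z' ⟨α, hα, hzz⟩ i)⟩
      · exact Finset.sum_congr rfl fun m _ => by rw [habs m]
  refine ⟨main, fun hne => ?_⟩
  rw [Set.eq_empty_iff_forall_notMem]
  rintro μ ⟨h1, h2⟩
  exact hne (main.mp ⟨μ, h1, h2⟩)


end SPI
end

section
/- (Lemma 1, second part, no beam splitter.) Let a parallel gate configuration have no detector in path i (i ∉ D) and path i not entering any beam splitter (i ∉ ⋃B), let z ∈ ℂ^N, and let p ∈ [z]_i. Then no detector Clicks (p({λ : q = j}) = 0 for every j ∈ D) and the output measure pK belongs to [Wz]_i. -/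
open MeasureTheory
open scoped Classical

namespace SPI

/-! ## Auxiliary lemmas -/

section Aux
variable {N : ℕ}

lemma noncommProd_diag {ι : Type*} (d : ι → Fin N → ℂ) :
    ∀ (F : Finset ι) (comm), F.noncommProd (fun j => Matrix.diagonal (d j)) comm
      = Matrix.diagonal (fun m => ∏ j ∈ F, d j m) := by
  intro F
  induction F using Finset.cons_induction with
  | empty => intro comm; simp
  | cons a s ha ih =>
      intro comm
      rw [Finset.noncommProd_cons, ih, Matrix.diagonal_mul_diagonal]
      have : (fun m => ∏ j ∈ Finset.cons a s ha, d j m) = fun m => d a m * ∏ j ∈ s, d j m :=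
        funext fun m => Finset.prod_cons ha
      rw [this]

lemma noncommProd_row_one {ι : Type*} (f : ι → Matrix (Fin N) (Fin N) ℂ) (m : Fin N) :
    ∀ (F : Finset ι) (comm), (∀ q ∈ F, ∀ b, f q m b = (1 : Matrix (Fin N) (Fin N) ℂ) m b) →
      ∀ b, (F.noncommProd f comm) m b = (1 : Matrix (Fin N) (Fin N) ℂ) m b := by
  intro F
  induction F using Finset.cons_induction with
  | empty => intro comm h b; simp
  | cons a s ha ih =>
      intro comm h b
      rw [Finset.noncommProd_cons, Matrix.mul_apply]
      have : ∀ k, f a m k * (s.noncommProd f (comm.mono fun _ => Finset.mem_cons.2 ∘ .inr)) k b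
          = (if m = k then (s.noncommProd f (comm.mono fun _ => Finset.mem_cons.2 ∘ .inr)) k b else 0) := by
        intro k
        rw [h a (Finset.mem_cons_self a s) k, Matrix.one_apply]
        by_cases hk : m = k <;> simp [hk]
      rw [Finset.sum_congr rfl fun k _ => this k, Finset.sum_ite_eq]
      simp only [Finset.mem_univ, if_true]
      exact ih _ (fun q hq => h q (Finset.mem_cons.2 (Or.inr hq))) b

lemma mulVec_apply_of_row_one {M : Matrix (Fin N) (Fin N) ℂ} {m : Fin N}
    (h : ∀ b, M m b = (1 : Matrix (Fin N) (Fin N) ℂ) m b) (v : Fin N → ℂ) :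
    M.mulVec v m = v m := by
  simp only [Matrix.mulVec, dotProduct, h, Matrix.one_apply]
  simp [ite_mul]

end Aux
section Aux2
variable {N : ℕ}

lemma Dprod_eq (c : Config N) :
    Dprod c = Matrix.diagonal (fun m => if m ∈ c.De then 0 else 1) := by
  have h1 : (fun j : Fin N => (1 : Matrix (Fin N) (Fin N) ℂ) - Pmat j)
      = fun j => Matrix.diagonal (fun a => if a = j then 0 else 1) := by
    funext j
    rw [oneSubP_diagonal]
    have : (fun a : Fin N => 1 - if a = j then (1:ℂ) else 0)
        = fun a => if a = j then 0 else 1 :=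
      funext fun a => by by_cases h : a = j <;> simp [h]
    rw [this]
  rw [Dprod]
  simp_rw [h1]
  rw [noncommProd_diag]
  have : (fun m : Fin N => ∏ j ∈ c.De, if m = j then (0:ℂ) else 1)
      = fun m => if m ∈ c.De then 0 else 1 := by
    funext m
    by_cases h : m ∈ c.De
    · rw [if_pos h, Finset.prod_eq_zero h (by simp)]
    · rw [if_neg h, Finset.prod_eq_one]
      intro j hj
      rw [if_neg]
      rintro rfl; exact h hj
  rw [this]

lemma Sprod_eq (c : Config N) :
    Sprod c = Matrix.diagonal
      (fun m => if m ∈ c.Sh then Complex.exp (Complex.I * (c.ω m : ℂ)) else 1) := by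
  have h1 : (fun k : Fin N => Smat k (c.ω k))
      = fun k => Matrix.diagonal
        (fun a => if a = k then Complex.exp (Complex.I * (c.ω k : ℂ)) else 1) := by
    funext k; rfl
  rw [Sprod]
  simp_rw [h1]
  rw [noncommProd_diag]
  have : (fun m : Fin N => ∏ j ∈ c.Sh, if m = j then Complex.exp (Complex.I * (c.ω j : ℂ)) else 1)
      = fun m => if m ∈ c.Sh then Complex.exp (Complex.I * (c.ω m : ℂ)) else 1 := by
    funext m
    by_cases h : m ∈ c.Sh
    · rw [if_pos h, Finset.prod_eq_single_of_mem m h]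
      · rw [if_pos rfl]
      · intro j hj hjm
        rw [if_neg (Ne.symm hjm)]
    · rw [if_neg h, Finset.prod_eq_one]
      intro j hj
      rw [if_neg]
      rintro rfl; exact h hj
  rw [this]

lemma Bmat_mulVec_fst {s t : Fin N} (hst : s ≠ t) (R T : ℝ) (w : Fin N → ℂ) :
    (Bmat s t R T).mulVec w s
      = Complex.I * (Real.sqrt R : ℂ) * w s + (Real.sqrt T : ℂ) * w t := by
  have key : ∀ b : Fin N, Bmat s t R T s b * w b
      = (if b = s then Complex.I * (Real.sqrt R:ℂ) * w s else 0)
        + (if b = t then (Real.sqrt T:ℂ) * w t else 0) := by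
    intro b
    by_cases h1 : b = s
    · subst h1; simp [Bmat, hst, hst.symm]
    · by_cases h2 : b = t
      · subst h2; simp [Bmat, hst, hst.symm, h1]
      · simp [Bmat, hst, hst.symm, h1, h2]
  have hmv : (Bmat s t R T).mulVec w s = ∑ b : Fin N, Bmat s t R T s b * w b := rfl
  rw [hmv, Finset.sum_congr rfl fun b _ => key b, Finset.sum_add_distrib]
  simp [Finset.sum_ite_eq']

lemma Bmat_mulVec_snd {s t : Fin N} (hst : s ≠ t) (R T : ℝ) (w : Fin N → ℂ) :
    (Bmat s t R T).mulVec w t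
      = (Real.sqrt T : ℂ) * w s + Complex.I * (Real.sqrt R : ℂ) * w t := by
  have key : ∀ b : Fin N, Bmat s t R T t b * w b
      = (if b = s then (Real.sqrt T:ℂ) * w s else 0)
        + (if b = t then Complex.I * (Real.sqrt R:ℂ) * w t else 0) := by
    intro b
    by_cases h1 : b = s
    · subst h1; simp [Bmat, hst, hst.symm]
    · by_cases h2 : b = t
      · subst h2; simp [Bmat, hst, hst.symm, h1]
      · simp [Bmat, hst, hst.symm, h1, h2]
  have hmv : (Bmat s t R T).mulVec w t = ∑ b : Fin N, Bmat s t R T t b * w b := rfl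
  rw [hmv, Finset.sum_congr rfl fun b _ => key b, Finset.sum_add_distrib]
  simp [Finset.sum_ite_eq']

end Aux2
section Aux3
variable {N : ℕ}

lemma noncommProd_mulVec_eq_self (f : Fin N × Fin N → Matrix (Fin N) (Fin N) ℂ)
    (hblk : ∀ q, IsBlock q.1 q.2 (f q)) (m : Fin N)
    (F : Finset (Fin N × Fin N)) (comm) (hm : ∀ q ∈ F, m ≠ q.1 ∧ m ≠ q.2)
    (v : Fin N → ℂ) : ((F.noncommProd f comm).mulVec v) m = v m := by
  apply mulVec_apply_of_row_one
  apply noncommProd_row_one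
  intro q hq b
  exact hblk q m b (by
    rintro ⟨h1 | h1, h2⟩
    · exact (hm q hq).1 h1
    · exact (hm q hq).2 h1)

lemma not_mem_pair_of_erase (c : Config N) {p q : Fin N × Fin N} (hp : p ∈ c.Bs)
    (hq : q ∈ c.Bs.erase p) : (p.1 ≠ q.1 ∧ p.1 ≠ q.2) ∧ (p.2 ≠ q.1 ∧ p.2 ≠ q.2) := by
  obtain ⟨hne, hqBs⟩ := Finset.mem_erase.1 hq
  obtain ⟨h1, h2, h3, h4⟩ := c.hBB p hp q hqBs (Ne.symm hne)
  exact ⟨⟨h1, h2⟩, ⟨h3, h4⟩⟩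

lemma Bprod_mulVec_notin (c : Config N) {m : Fin N} (hm : ¬ inB c m) (v : Fin N → ℂ) :
    (Bprod c).mulVec v m = v m := by
  apply noncommProd_mulVec_eq_self _ (fun q => isBlock_Bmat q.1 q.2 _ _)
  intro q hq
  constructor
  · rintro rfl; exact hm ⟨q, hq, Or.inl rfl⟩
  · rintro rfl; exact hm ⟨q, hq, Or.inr rfl⟩

lemma Bprod_mulVec_fst (c : Config N) {p : Fin N × Fin N} (hp : p ∈ c.Bs) (v : Fin N → ℂ) :
    (Bprod c).mulVec v p.1
      = Complex.I * (Real.sqrt (c.R p) : ℂ) * v p.1 + (Real.sqrt (c.T p) : ℂ) * v p.2 := by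
  have hc : (c.Bs : Set (Fin N × Fin N)).Pairwise
      (Function.onFun Commute fun p : Fin N × Fin N => Bmat p.1 p.2 (c.R p) (c.T p)) :=
    fun p hp q hq hpq => by
      obtain ⟨h1, h2, h3, h4⟩ := c.hBB p hp q hq hpq
      exact commute_of_isBlock (isBlock_Bmat _ _ _ _) (isBlock_Bmat _ _ _ _) h1 h2 h3 h4
  rw [show Bprod c = _ from (Finset.mul_noncommProd_erase c.Bs hp _ hc).symm, ← Matrix.mulVec_mulVec]
  rw [Bmat_mulVec_fst (c.hst p hp)]
  exact congrArg₂ (· + ·)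
    (congrArg _ (noncommProd_mulVec_eq_self _ (fun q => isBlock_Bmat q.1 q.2 _ _) _ _ _
      (fun q hq => (not_mem_pair_of_erase c hp hq).1) v))
    (congrArg _ (noncommProd_mulVec_eq_self _ (fun q => isBlock_Bmat q.1 q.2 _ _) _ _ _
      (fun q hq => (not_mem_pair_of_erase c hp hq).2) v))

lemma Bprod_mulVec_snd (c : Config N) {p : Fin N × Fin N} (hp : p ∈ c.Bs) (v : Fin N → ℂ) :
    (Bprod c).mulVec v p.2
      = (Real.sqrt (c.T p) : ℂ) * v p.1 + Complex.I * (Real.sqrt (c.R p) : ℂ) * v p.2 := by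
  have hc : (c.Bs : Set (Fin N × Fin N)).Pairwise
      (Function.onFun Commute fun p : Fin N × Fin N => Bmat p.1 p.2 (c.R p) (c.T p)) :=
    fun p hp q hq hpq => by
      obtain ⟨h1, h2, h3, h4⟩ := c.hBB p hp q hq hpq
      exact commute_of_isBlock (isBlock_Bmat _ _ _ _) (isBlock_Bmat _ _ _ _) h1 h2 h3 h4
  rw [show Bprod c = _ from (Finset.mul_noncommProd_erase c.Bs hp _ hc).symm, ← Matrix.mulVec_mulVec]
  rw [Bmat_mulVec_snd (c.hst p hp)]
  exact congrArg₂ (· + ·)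
    (congrArg _ (noncommProd_mulVec_eq_self _ (fun q => isBlock_Bmat q.1 q.2 _ _) _ _ _
      (fun q hq => (not_mem_pair_of_erase c hp hq).1) v))
    (congrArg _ (noncommProd_mulVec_eq_self _ (fun q => isBlock_Bmat q.1 q.2 _ _) _ _ _
      (fun q hq => (not_mem_pair_of_erase c hp hq).2) v))

lemma Wmat_mulVec_apply (c : Config N) (v : Fin N → ℂ) (m : Fin N) :
    (Wmat c).mulVec v m
      = (if m ∈ c.De then 0 else 1)
        * ((if m ∈ c.Sh then Complex.exp (Complex.I * (c.ω m : ℂ)) else 1)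
          * ((Bprod c).mulVec v m)) := by
  rw [Wmat, ← Matrix.mulVec_mulVec, ← Matrix.mulVec_mulVec, Dprod_eq, Sprod_eq,
    Matrix.mulVec_diagonal, Matrix.mulVec_diagonal]

end Aux3
section Aux4
variable {N : ℕ}

lemma le_tmax (τ : Fin N → ℝ) (j : Fin N) : τ j ≤ tmax τ :=
  le_ciSup (Set.finite_range τ).bddAbove j

lemma tmax_le [Nonempty (Fin N)] {τ : Fin N → ℝ} {a : ℝ} (h : ∀ j, τ j ≤ a) : tmax τ ≤ a :=
  ciSup_le h

/-- The deterministic new ontic state produced by the gates. -/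
noncomputable def gpt (c : Config N) (l : Lam N) : Lam N :=
  (l.1, newAmp c l.1 l.2.1 l.2.2, newTau c l.1 l.2.2)

lemma step_eq_dirac (c : Config N) (l : Lam N) (h : ¬ inB c l.1) :
    step c l = Measure.dirac (gpt c l) := by
  simp only [step]
  rw [dif_neg h]
  rfl

lemma choose_mem {c : Config N} {m : Fin N} (hm : inB c m) :
    hm.choose ∈ c.Bs ∧ (m = hm.choose.1 ∨ m = hm.choose.2) :=
  hm.choose_spec

lemma gpt_mem (c : Config N) (i : Fin N) (hiD : i ∉ c.De) (hiB : ¬ inB c i)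
    (z : Fin N → ℂ) {l : Lam N} (hl : l ∈ lamSet z i) :
    gpt c l ∈ lamSet (Wvec c z) i := by
  haveI : Nonempty (Fin N) := ⟨i⟩
  obtain ⟨q, u, τ⟩ := l
  obtain ⟨hq, hτi, hpos, α, hα, hvz⟩ := hl
  dsimp only at hq hτi hpos hvz
  subst hq
  set τ' := newTau c q τ with hτ'def
  set u' := newAmp c q u τ with hu'def
  have h1 : τ' q = τ q / 2 := by
    rw [hτ'def]
    simp only [newTau]
    rw [if_neg hiD, dif_neg hiB]
  have hbound : ∀ m, τ' m ≤ tmax τ / 2 := by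
    intro m
    rw [hτ'def]
    simp only [newTau]
    by_cases hD : m ∈ c.De
    · rw [if_pos hD]
      have : ¬ (q = m) := by rintro rfl; exact hiD hD
      rw [if_neg this]
      linarith
    · rw [if_neg hD]
      by_cases hB : inB c m
      · rw [dif_pos hB]
        have h1 := le_tmax τ hB.choose.1
        have h2 := le_tmax τ hB.choose.2
        have := max_le h1 h2
        linarith
      · rw [dif_neg hB]
        have := le_tmax τ m
        linarith
  have htm' : tmax τ' = tmax τ / 2 := by
    refine le_antisymm (tmax_le hbound) ?_
    have := le_tmax τ' q
    rw [h1, hτi] at this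
    exact this
  refine ⟨rfl, ?_, ?_, ?_⟩
  · show τ' q = tmax τ'
    rw [h1, htm', hτi]
  · show 0 < tmax τ'
    rw [htm']; linarith
  · show Propto (deltaVec τ' u') (Wvec c z)
    refine ⟨α, hα, ?_⟩
    have key : deltaVec τ' u' = (Wmat c).mulVec (deltaVec τ u) := by
      funext m
      rw [Wmat_mulVec_apply]
      set v := deltaVec τ u with hvdef
      have hvm : ∀ k, v k = if τ k = tmax τ then u k else 0 := fun k => rfl
      have hdv : deltaVec τ' u' m = if τ' m = tmax τ / 2 then u' m else 0 := by
        rw [deltaVec, htm']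
      by_cases hD : m ∈ c.De
      · -- detector path
        have him : ¬ (q = m) := by rintro rfl; exact hiD hD
        have hτ'm : τ' m = 0 := by
          rw [hτ'def]; simp only [newTau]; rw [if_pos hD, if_neg him]
        rw [hdv, hτ'm, if_neg (by intro h; linarith), if_pos hD, zero_mul]
      · rw [if_neg hD]
        by_cases hS : m ∈ c.Sh
        · -- phase shifter path
          have hB : ¬ inB c m := by
            rintro ⟨p, hp, hm | hm⟩
            · exact (c.hBdisj p hp).2.2.2.2.1 (hm ▸ hS)
            · exact (c.hBdisj p hp).2.2.2.2.2 (hm ▸ hS)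
          have hτ'm : τ' m = τ m / 2 := by
            rw [hτ'def]; simp only [newTau]; rw [if_neg hD, dif_neg hB]
          have hu'm : u' m = Complex.exp (Complex.I * (c.ω m : ℂ)) * u m := by
            rw [hu'def]; simp only [newAmp]; rw [if_neg hD, if_pos hS]
          rw [if_pos hS, Bprod_mulVec_notin c hB, one_mul, hdv, hτ'm, hu'm, hvm]
          by_cases hc : τ m = tmax τ
          · rw [if_pos (by rw [hc]), if_pos hc]
          · rw [if_neg (by intro h; apply hc; linarith), if_neg hc, mul_zero]
        · rw [if_neg hS, one_mul, one_mul]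
          by_cases hB : inB c m
          · -- beam splitter path
            obtain ⟨hpBs, hpm⟩ := choose_mem hB
            set p := hB.choose with hpdef
            have hτ'm : τ' m = max (τ p.1) (τ p.2) / 2 := by
              rw [hτ'def]; simp only [newTau]; rw [if_neg hD, dif_pos hB]
            have hMle : max (τ p.1) (τ p.2) ≤ tmax τ := max_le (le_tmax τ p.1) (le_tmax τ p.2)
            have hu'm : u' m =
                (if m = p.1 then
                  Complex.I * (Real.sqrt (c.R p) : ℂ)
                      * (if τ p.1 = max (τ p.1) (τ p.2) then u p.1 else 0)
                    + (Real.sqrt (c.T p) : ℂ)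
                      * (if τ p.2 = max (τ p.1) (τ p.2) then u p.2 else 0)
                else
                  (Real.sqrt (c.T p) : ℂ)
                      * (if τ p.1 = max (τ p.1) (τ p.2) then u p.1 else 0)
                    + Complex.I * (Real.sqrt (c.R p) : ℂ)
                      * (if τ p.2 = max (τ p.1) (τ p.2) then u p.2 else 0)) := by
              rw [hu'def]; simp only [newAmp]; rw [if_neg hD, if_neg hS, dif_pos hB]
            have hBv : (Bprod c).mulVec v m =
                (if m = p.1 then
                  Complex.I * (Real.sqrt (c.R p) : ℂ) * v p.1 + (Real.sqrt (c.T p) : ℂ) * v p.2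
                else
                  (Real.sqrt (c.T p) : ℂ) * v p.1
                    + Complex.I * (Real.sqrt (c.R p) : ℂ) * v p.2) := by
              by_cases hm1 : m = p.1
              · rw [if_pos hm1, hm1, Bprod_mulVec_fst c hpBs]
              · rw [if_neg hm1]
                have hm2 : m = p.2 := hpm.resolve_left hm1
                rw [hm2, Bprod_mulVec_snd c hpBs]
            rw [hdv, hτ'm, hu'm, hBv]
            by_cases hc : max (τ p.1) (τ p.2) = tmax τ
            · rw [if_pos (by rw [hc])]
              have e1 : (if τ p.1 = max (τ p.1) (τ p.2) then u p.1 else 0) = v p.1 := by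
                rw [hvm, hc]
              have e2 : (if τ p.2 = max (τ p.1) (τ p.2) then u p.2 else 0) = v p.2 := by
                rw [hvm, hc]
              rw [e1, e2]
            · rw [if_neg (by intro h; apply hc; linarith)]
              have e1 : v p.1 = 0 := by
                rw [hvm, if_neg]
                intro h
                exact hc (le_antisymm hMle (h ▸ le_max_left _ _))
              have e2 : v p.2 = 0 := by
                rw [hvm, if_neg]
                intro h
                exact hc (le_antisymm hMle (h ▸ le_max_right _ _))
              rw [e1, e2]
              by_cases hm1 : m = p.1 <;> simp [hm1]
          · -- free path
            have hτ'm : τ' m = τ m / 2 := by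
              rw [hτ'def]; simp only [newTau]; rw [if_neg hD, dif_neg hB]
            have hu'm : u' m = u m := by
              rw [hu'def]; simp only [newAmp]; rw [if_neg hD, if_neg hS, dif_neg hB]
            rw [hdv, hτ'm, hu'm, Bprod_mulVec_notin c hB, hvm]
            by_cases hc : τ m = tmax τ
            · rw [if_pos (by rw [hc]), if_pos hc]
            · rw [if_neg (by intro h; apply hc; linarith), if_neg hc]
    rw [key, hvz, Matrix.mulVec_smul]
    rfl

end Aux4
section Aux5
variable {N : ℕ}

lemma meas_tau (j : Fin N) : Measurable fun l : Lam N => l.2.2 j :=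
  (measurable_pi_apply j).comp (measurable_snd.comp measurable_snd)

lemma meas_u (j : Fin N) : Measurable fun l : Lam N => l.2.1 j :=
  (measurable_pi_apply j).comp (measurable_fst.comp measurable_snd)

lemma meas_tmax : Measurable fun l : Lam N => tmax l.2.2 := by
  unfold tmax
  exact Measurable.iSup fun j => meas_tau j

lemma meas_dv (j : Fin N) : Measurable fun l : Lam N => deltaVec l.2.2 l.2.1 j := by
  simp only [deltaVec]
  exact Measurable.ite
    (measurableSet_eq_fun (meas_tau j) meas_tmax)
    (meas_u j) measurable_const

lemma meas_fst_eq (m : Fin N) : MeasurableSet {l : Lam N | l.1 = m} :=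
  measurable_fst (measurableSet_singleton m)

lemma measurableSet_lamSet (z : Fin N → ℂ) (i : Fin N) : MeasurableSet (lamSet z i) := by
  have h1 : MeasurableSet {l : Lam N | l.1 = i} := meas_fst_eq i
  have h2 : MeasurableSet {l : Lam N | l.2.2 i = tmax l.2.2} :=
    measurableSet_eq_fun (meas_tau i) meas_tmax
  have h3 : MeasurableSet {l : Lam N | 0 < tmax l.2.2} := meas_tmax measurableSet_Ioi
  have h4 : MeasurableSet {l : Lam N | Propto (deltaVec l.2.2 l.2.1) z} := by
    by_cases hz : z = 0
    · subst hz
      have hset : {l : Lam N | Propto (deltaVec l.2.2 l.2.1) 0}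
          = ⋂ m, {l : Lam N | deltaVec l.2.2 l.2.1 m = 0} := by
        ext l
        simp only [Set.mem_iInter, Set.mem_setOf_eq]
        constructor
        · rintro ⟨α, hα, hv⟩ m
          rw [hv]
          simp
        · intro h
          exact ⟨1, one_ne_zero, funext fun m => by simp [h m]⟩
      rw [hset]
      exact MeasurableSet.iInter fun m => (meas_dv m) (measurableSet_singleton 0)
    · obtain ⟨j0, hj0⟩ := Function.ne_iff.1 hz
      have hj0' : z j0 ≠ 0 := hj0
      have hset : {l : Lam N | Propto (deltaVec l.2.2 l.2.1) z}
          = {l : Lam N | deltaVec l.2.2 l.2.1 j0 ≠ 0}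
            ∩ ⋂ m, {l : Lam N |
                deltaVec l.2.2 l.2.1 m = deltaVec l.2.2 l.2.1 j0 / z j0 * z m} := by
        ext l
        simp only [Set.mem_inter_iff, Set.mem_iInter, Set.mem_setOf_eq]
        constructor
        · rintro ⟨α, hα, hv⟩
          have hj : ∀ m, deltaVec l.2.2 l.2.1 m = α * z m := by
            intro m; rw [hv]; rfl
          constructor
          · rw [hj j0]
            exact mul_ne_zero hα hj0'
          · intro m
            rw [hj m, hj j0, mul_div_assoc, div_self hj0', mul_one]
        · rintro ⟨hne, hall⟩
          refine ⟨deltaVec l.2.2 l.2.1 j0 / z j0, div_ne_zero hne hj0', funext fun m => ?_⟩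
          rw [hall m]
          rfl
      rw [hset]
      refine MeasurableSet.inter ?_ (MeasurableSet.iInter fun m => ?_)
      · exact ((meas_dv j0) (measurableSet_singleton 0)).compl
      · exact measurableSet_eq_fun (meas_dv m)
          (((meas_dv j0).div_const (z j0)).mul_const (z m))
  exact h1.inter (h2.inter (h3.inter h4))

lemma meas_newTau (c : Config N) : Measurable fun l : Lam N => newTau c l.1 l.2.2 := by
  apply measurable_pi_lambda
  intro m
  by_cases hD : m ∈ c.De
  · have he : (fun l : Lam N => newTau c l.1 l.2.2 m)
        = fun l => if l.1 = m then (1:ℝ) else 0 := by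
      funext l
      simp only [newTau]
      rw [if_pos hD]
    rw [he]
    exact Measurable.ite (meas_fst_eq m) measurable_const measurable_const
  · by_cases hB : inB c m
    · have he : (fun l : Lam N => newTau c l.1 l.2.2 m)
          = fun l => max (l.2.2 hB.choose.1) (l.2.2 hB.choose.2) / 2 := by
        funext l
        simp only [newTau]
        rw [if_neg hD, dif_pos hB]
      rw [he]
      exact ((meas_tau _).max (meas_tau _)).div_const 2
    · have he : (fun l : Lam N => newTau c l.1 l.2.2 m) = fun l => l.2.2 m / 2 := by
        funext l
        simp only [newTau]
        rw [if_neg hD, dif_neg hB]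
      rw [he]
      exact (meas_tau m).div_const 2

lemma meas_newAmp (c : Config N) : Measurable fun l : Lam N => newAmp c l.1 l.2.1 l.2.2 := by
  apply measurable_pi_lambda
  intro m
  by_cases hD : m ∈ c.De
  · have he : (fun l : Lam N => newAmp c l.1 l.2.1 l.2.2 m)
        = fun l => if l.1 = m then 1 else l.2.1 m := by
      funext l
      simp only [newAmp]
      rw [if_pos hD]
    rw [he]
    exact Measurable.ite (meas_fst_eq m) measurable_const (meas_u m)
  · by_cases hS : m ∈ c.Sh
    · have he : (fun l : Lam N => newAmp c l.1 l.2.1 l.2.2 m)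
          = fun l => Complex.exp (Complex.I * (c.ω m : ℂ)) * l.2.1 m := by
        funext l
        simp only [newAmp]
        rw [if_neg hD, if_pos hS]
      rw [he]
      exact (meas_u m).const_mul _
    · by_cases hB : inB c m
      · have hms1 : MeasurableSet {l : Lam N |
            l.2.2 hB.choose.1 = max (l.2.2 hB.choose.1) (l.2.2 hB.choose.2)} :=
          measurableSet_eq_fun (meas_tau _)
            ((meas_tau _).max (meas_tau _))
        have hms2 : MeasurableSet {l : Lam N |
            l.2.2 hB.choose.2 = max (l.2.2 hB.choose.1) (l.2.2 hB.choose.2)} :=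
          measurableSet_eq_fun (meas_tau _)
            ((meas_tau _).max (meas_tau _))
        have he : (fun l : Lam N => newAmp c l.1 l.2.1 l.2.2 m)
            = fun l =>
              if m = hB.choose.1 then
                Complex.I * (Real.sqrt (c.R hB.choose) : ℂ)
                    * (if l.2.2 hB.choose.1 = max (l.2.2 hB.choose.1) (l.2.2 hB.choose.2)
                        then l.2.1 hB.choose.1 else 0)
                  + (Real.sqrt (c.T hB.choose) : ℂ)
                    * (if l.2.2 hB.choose.2 = max (l.2.2 hB.choose.1) (l.2.2 hB.choose.2)
                        then l.2.1 hB.choose.2 else 0)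
              else
                (Real.sqrt (c.T hB.choose) : ℂ)
                    * (if l.2.2 hB.choose.1 = max (l.2.2 hB.choose.1) (l.2.2 hB.choose.2)
                        then l.2.1 hB.choose.1 else 0)
                  + Complex.I * (Real.sqrt (c.R hB.choose) : ℂ)
                    * (if l.2.2 hB.choose.2 = max (l.2.2 hB.choose.1) (l.2.2 hB.choose.2)
                        then l.2.1 hB.choose.2 else 0) := by
          funext l
          simp only [newAmp]
          rw [if_neg hD, if_neg hS, dif_pos hB]
        rw [he]
        have m1 : Measurable fun l : Lam N =>
            (if l.2.2 hB.choose.1 = max (l.2.2 hB.choose.1) (l.2.2 hB.choose.2)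
              then l.2.1 hB.choose.1 else 0) :=
          Measurable.ite hms1 (meas_u _) measurable_const
        have m2 : Measurable fun l : Lam N =>
            (if l.2.2 hB.choose.2 = max (l.2.2 hB.choose.1) (l.2.2 hB.choose.2)
              then l.2.1 hB.choose.2 else 0) :=
          Measurable.ite hms2 (meas_u _) measurable_const
        by_cases hm1 : m = hB.choose.1
        · simp only [if_pos hm1]
          exact ((m1.const_mul _).add (m2.const_mul _))
        · simp only [if_neg hm1]
          exact ((m1.const_mul _).add (m2.const_mul _))
      · have he : (fun l : Lam N => newAmp c l.1 l.2.1 l.2.2 m) = fun l => l.2.1 m := by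
          funext l
          simp only [newAmp]
          rw [if_neg hD, if_neg hS, dif_neg hB]
        rw [he]
        exact meas_u m

lemma meas_gpt (c : Config N) : Measurable (gpt c) :=
  measurable_fst.prodMk ((meas_newAmp c).prodMk (meas_newTau c))

end Aux5

/-- Lemma 1, second part, no beam splitter. If `i ∉ D`, `i ∉ ⋃B` and
`p ∈ [z]_i`, then no detector Clicks and `pK ∈ [Wz]_i`. -/
theorem lemma1_no_beam_splitter {N : ℕ} (c : Config N) (i : Fin N) (hiD : i ∉ c.De)
    (hiB : ¬ inB c i) (z : Fin N → ℂ) (p : Measure (Lam N)) (hp : memClassI z i p) :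
    (∀ j ∈ c.De, p {l : Lam N | l.1 = j} = 0) ∧
    memClassI (Wvec c z) i (out c p) := by
  obtain ⟨hprob, hfull⟩ := hp
  have hA : MeasurableSet (lamSet z i) := measurableSet_lamSet z i
  have hAc : p (lamSet z i)ᶜ = 0 := by
    rw [measure_compl hA (measure_ne_top p _), hfull, measure_univ, tsub_self]
  constructor
  · intro j hj
    apply measure_mono_null _ hAc
    intro l hl
    simp only [Set.mem_setOf_eq] at hl
    intro hlA
    have : i = j := hlA.1.symm.trans hl
    rw [this] at hiD
    exact hiD hj
  · have hgpt : Measurable (gpt c) := meas_gpt c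
    have hae : step c =ᵐ[p] fun l => Measure.dirac (gpt c l) := by
      refine Filter.eventually_of_mem (MeasureTheory.mem_ae_iff.2 hAc) ?_
      intro l hl
      exact step_eq_dirac c l (by rw [hl.1]; exact hiB)
    have hout : out c p = p.map (gpt c) := by
      rw [out]
      have h1 : p.bind (step c) = p.bind (fun l => Measure.dirac (gpt c l)) := by
        simp only [Measure.bind]
        rw [Measure.map_congr hae]
      rw [h1]
      exact Measure.bind_dirac_eq_map p hgpt
    have hsub : lamSet z i ⊆ gpt c ⁻¹' lamSet (Wvec c z) i :=
      fun l hl => gpt_mem c i hiD hiB z hl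
    have hPM : IsProbabilityMeasure (p.map (gpt c)) :=
      Measure.isProbabilityMeasure_map hgpt.aemeasurable
    constructor
    · rw [hout]
      exact hPM
    · rw [hout]
      refine le_antisymm prob_le_one ?_
      calc (1 : ENNReal) = p (lamSet z i) := hfull.symm
        _ ≤ p (gpt c ⁻¹' lamSet (Wvec c z) i) := measure_mono hsub
        _ ≤ (p.map (gpt c)) (lamSet (Wvec c z) i) :=
            Measure.le_map_apply hgpt.aemeasurable _

end SPI
end
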